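/- Let ν, σ > 0 and let x, β ∈ ℝ^p be fixed. Define p(t | β, σ) = C(ν) · σ^{-1} t^{-1} [ (log t − xᵀβ)²/(2σ²) + ν/2 ]^{-(1/2 + ν/2)} for t > 0, where C(ν) = Γ((1+ν)/2)(ν/2)^{ν/2}/(√(2π) Γ(ν/2)). Then the ratio p(t | β, σ) / p(t | 0, 1) converges to σ^ν as t → ∞. -/

import Mathlib

theorem stmt_12 (p : ℕ) (ν σ : ℝ) (hν : 0 < ν) (hσ : 0 < σ) (x β : Fin p → ℝ) :
    Filter.Tendsto
      (fun t : ℝ =>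
        ((Real.Gamma ((1 + ν) / 2) * (ν / 2) ^ (ν / 2) /
            (Real.sqrt (2 * Real.pi) * Real.Gamma (ν / 2))) *
          σ⁻¹ * t⁻¹ *
          ((Real.log t - ∑ i, x i * β i) ^ 2 / (2 * σ ^ 2) + ν / 2) ^ (-(1/2 + ν / 2))) /
        ((Real.Gamma ((1 + ν) / 2) * (ν / 2) ^ (ν / 2) /
            (Real.sqrt (2 * Real.pi) * Real.Gamma (ν / 2))) *
          (1 : ℝ)⁻¹ * t⁻¹ *
          ((Real.log t - 0) ^ 2 / (2 * (1 : ℝ) ^ 2) + ν / 2) ^ (-(1/2 + ν / 2))))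
      Filter.atTop (nhds (σ ^ ν)) := by
  set μ : ℝ := ∑ i, x i * β i with hμ
  set e : ℝ := -(1/2 + ν / 2) with he
  have hΓ1 : 0 < Real.Gamma ((1 + ν) / 2) := Real.Gamma_pos_of_pos (by linarith)
  have hΓ2 : 0 < Real.Gamma (ν / 2) := Real.Gamma_pos_of_pos (by linarith)
  have hC : 0 < Real.Gamma ((1 + ν) / 2) * (ν / 2) ^ (ν / 2) /
      (Real.sqrt (2 * Real.pi) * Real.Gamma (ν / 2)) := by
    have h2π : 0 < Real.sqrt (2 * Real.pi) := Real.sqrt_pos.mpr (by positivity)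
    positivity
  set F : ℝ → ℝ := fun v =>
    σ⁻¹ * (((1 - μ * v) ^ 2 / (2 * σ ^ 2) + ν * v ^ 2 / 2) / (1/2 + ν * v ^ 2 / 2)) ^ e
    with hF
  have hF0 : F 0 = σ ^ ν := by
    have h1 : ((1 - μ * 0) ^ 2 / (2 * σ ^ 2) + ν * 0 ^ 2 / 2) / (1/2 + ν * 0 ^ 2 / 2)
        = σ ^ (-2 : ℝ) := by
      rw [show σ ^ (-2 : ℝ) = (σ ^ (2:ℕ))⁻¹ by
        rw [← Real.rpow_natCast σ 2, ← Real.rpow_neg hσ.le]; norm_num]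
      field_simp
      ring
    rw [hF]
    simp only [h1]
    rw [← Real.rpow_mul hσ.le, show σ⁻¹ = σ ^ (-1 : ℝ) from (Real.rpow_neg_one σ).symm,
      ← Real.rpow_add hσ]
    congr 1
    rw [he]; ring
  have hcont : ContinuousAt F 0 := by
    have harg : ContinuousAt (fun v : ℝ =>
        ((1 - μ * v) ^ 2 / (2 * σ ^ 2) + ν * v ^ 2 / 2) / (1/2 + ν * v ^ 2 / 2)) 0 := by
      apply ContinuousAt.div
      · fun_prop
      · fun_prop
      · norm_num
    have hne : ((1 - μ * 0) ^ 2 / (2 * σ ^ 2) + ν * 0 ^ 2 / 2) / (1/2 + ν * 0 ^ 2 / 2) ≠ 0 := by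
      have hσ2 : σ ^ 2 > 0 := by positivity
      norm_num
      positivity
    exact continuousAt_const.mul (harg.rpow_const (Or.inl hne))
  have hinv : Filter.Tendsto (fun t : ℝ => (Real.log t)⁻¹) Filter.atTop (nhds 0) :=
    tendsto_inv_atTop_zero.comp Real.tendsto_log_atTop
  have hmain : Filter.Tendsto (fun t : ℝ => F (Real.log t)⁻¹) Filter.atTop (nhds (σ ^ ν)) := by
    rw [← hF0]
    exact (hcont.tendsto).comp hinv
  refine hmain.congr' ?_
  filter_upwards [Filter.eventually_gt_atTop (1 : ℝ)] with t ht
  have ht0 : 0 < t := lt_trans one_pos ht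
  have hu : 0 < Real.log t := Real.log_pos ht
  set u : ℝ := Real.log t
  have hA : 0 < (u - μ) ^ 2 / (2 * σ ^ 2) + ν / 2 := by positivity
  have hB : 0 < (u - 0) ^ 2 / (2 * (1:ℝ) ^ 2) + ν / 2 := by positivity
  have hAB : ((1 - μ * u⁻¹) ^ 2 / (2 * σ ^ 2) + ν * (u⁻¹) ^ 2 / 2) / (1/2 + ν * (u⁻¹) ^ 2 / 2)
      = ((u - μ) ^ 2 / (2 * σ ^ 2) + ν / 2) / ((u - 0) ^ 2 / (2 * (1:ℝ) ^ 2) + ν / 2) := by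
    rw [div_eq_div_iff (by positivity : (0:ℝ) < 1/2 + ν * (u⁻¹) ^ 2 / 2).ne' hB.ne']
    field_simp
    ring
  rw [hF]
  simp only [hAB]
  rw [Real.div_rpow hA.le hB.le]
  have hBe : ((u - 0) ^ 2 / (2 * (1:ℝ) ^ 2) + ν / 2) ^ e ≠ 0 :=
    (Real.rpow_pos_of_pos hB e).ne'
  field_simp
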